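/- Let Σ₁, Σ₂ be d×d symmetric positive definite matrices and set Y = Σ₁^{1/2}(Σ₁^{1/2} Σ₂ Σ₁^{1/2})^{1/2} Σ₁^{-1/2}. Then the 2d×2d block matrix [[Σ₁, Y],[Yᵀ, Σ₂]] is positive semidefinite, and Tr(Y) = Tr((Σ₁^{1/2} Σ₂ Σ₁^{1/2})^{1/2}). -/

import Mathlib

open Matrix BigOperators

open scoped MatrixOrder Matrix.Norms.L2Operator in
open Classical in
noncomputable def sqrtm {d : ℕ} (A : Matrix (Fin d) (Fin d) ℝ) : Matrix (Fin d) (Fin d) ℝ :=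
  if h : A.PosSemidef then CFC.sqrt A else 0

/-- The spectral norm (ℓ²-operator norm) of a real matrix. -/
noncomputable def specNorm {d : ℕ} (M : Matrix (Fin d) (Fin d) ℝ) : ℝ :=
  ‖LinearMap.toContinuousLinearMap (Matrix.toEuclideanLin M)‖

theorem stmt7 {d : ℕ} (V₁ V₂ : Matrix (Fin d) (Fin d) ℝ)
    (h1 : V₁.PosDef) (h2 : V₂.PosDef) :
    (Matrix.fromBlocks V₁ (sqrtm V₁ * sqrtm (sqrtm V₁ * V₂ * sqrtm V₁) * (sqrtm V₁)⁻¹)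
      (sqrtm V₁ * sqrtm (sqrtm V₁ * V₂ * sqrtm V₁) * (sqrtm V₁)⁻¹)ᵀ V₂).PosSemidef ∧
    (sqrtm V₁ * sqrtm (sqrtm V₁ * V₂ * sqrtm V₁) * (sqrtm V₁)⁻¹).trace =
      (sqrtm (sqrtm V₁ * V₂ * sqrtm V₁)).trace := by
  open scoped MatrixOrder Matrix.Norms.L2Operator in
  have hS : sqrtm V₁ = CFC.sqrt V₁ := dif_pos h1.posSemidef
  set S := sqrtm V₁ with hSdef
  have hSpsd : S.PosSemidef := hS ▸ (Matrix.nonneg_iff_posSemidef.mp (CFC.sqrt_nonneg V₁))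
  have hSsymm : Sᵀ = S := hSpsd.isHermitian
  have hSS : S * S = V₁ := by rw [hS]; exact CFC.sqrt_mul_sqrt_self V₁ (Matrix.nonneg_iff_posSemidef.mpr h1.posSemidef)
  have hdet : S.det ≠ 0 := by
    intro h
    have : V₁.det = 0 := by rw [← hSS, det_mul, h, mul_zero]
    exact h1.det_pos.ne' this
  have hSinv : S⁻¹ * S = 1 := nonsing_inv_mul S (by simpa using hdet)
  have hSinvS : S * S⁻¹ = 1 := mul_nonsing_inv S (by simpa using hdet)
  have hSinvT : (S⁻¹)ᵀ = S⁻¹ := by rw [transpose_nonsing_inv, hSsymm]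
  have hMpsd : (S * V₂ * S).PosSemidef := by
    have := h2.posSemidef.conjTranspose_mul_mul_same (B := S)
    simpa [hSsymm] using this
  open scoped MatrixOrder Matrix.Norms.L2Operator in
  have hT : sqrtm (S * V₂ * S) = CFC.sqrt (S * V₂ * S) := dif_pos hMpsd
  set T := sqrtm (S * V₂ * S) with hTdef
  have hTpsd : T.PosSemidef := hT ▸ (Matrix.nonneg_iff_posSemidef.mp (CFC.sqrt_nonneg (S * V₂ * S)))
  have hTsymm : Tᵀ = T := hTpsd.isHermitian
  have hTT : T * T = S * V₂ * S := by rw [hT]; exact CFC.sqrt_mul_sqrt_self (S * V₂ * S) (Matrix.nonneg_iff_posSemidef.mpr hMpsd)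
  constructor
  · have key : Matrix.fromBlocks V₁ (S * T * S⁻¹) (S * T * S⁻¹)ᵀ V₂ =
        (Matrix.fromBlocks S (T * S⁻¹) 0 0)ᴴ * (Matrix.fromBlocks S (T * S⁻¹) 0 0) := by
      rw [fromBlocks_conjTranspose, fromBlocks_multiply]
      simp only [conjTranspose_eq_transpose_of_trivial, transpose_mul, hSsymm, hTsymm, hSinvT,
        transpose_zero, Matrix.mul_zero, Matrix.zero_mul, add_zero, hSS]
      have h22 : S⁻¹ * T * (T * S⁻¹) = V₂ := by
        calc S⁻¹ * T * (T * S⁻¹) = S⁻¹ * (T * T) * S⁻¹ := by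
              simp only [Matrix.mul_assoc]
          _ = V₂ := by
              rw [hTT]
              simp only [Matrix.mul_assoc, hSinvS, Matrix.mul_one]
              rw [← Matrix.mul_assoc, hSinv, Matrix.one_mul]
      rw [h22]
      simp only [Matrix.mul_assoc]
    rw [key]
    exact posSemidef_conjTranspose_mul_self _
  · rw [Matrix.trace_mul_comm, ← Matrix.mul_assoc, hSinv, Matrix.one_mul]
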